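/- Let s ∈ (0,1), n ≥ 1, and let Ω ⊂ ℝⁿ be a bounded domain. If A ⊆ Ω and E ⊆ ℝⁿ are measurable sets with |E ∩ A| = 0, then Per^s_Ω(E ∪ A) + L^s(E, A) = Per^s_Ω(E) + L^s(A, Eᶜ ∩ Aᶜ), as an identity in [0,∞]. (Equivalently, when these quantities are finite, Per^s_Ω(E ∪ A) − Per^s_Ω(E) = L^s(A, Eᶜ ∩ Aᶜ) − L^s(E, A).) -/

import Mathlib

open MeasureTheory Filter ENNReal

/-- The nonlocal interaction `L^s(A,B) = ∫_A ∫_B |x-y|^{-(n+s)} dy dx ∈ [0,∞]`. -/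
noncomputable def Ls (n : ℕ) (s : ℝ) (A B : Set (EuclideanSpace ℝ (Fin n))) : ℝ≥0∞ :=
  ∫⁻ x in A, ∫⁻ y in B, ENNReal.ofReal (1 / ‖x - y‖ ^ ((n : ℝ) + s))

/-- The nonlocal area `Per^s_Ω(A,B)`. -/
noncomputable def nlArea (n : ℕ) (s : ℝ) (Ω A B : Set (EuclideanSpace ℝ (Fin n))) : ℝ≥0∞ :=
  Ls n s (A ∩ Ω) (B ∩ Ω) + Ls n s (A ∩ Ω) (B ∩ Ωᶜ) + Ls n s (A ∩ Ωᶜ) (B ∩ Ω)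

/-- The fractional `s`-perimeter `Per^s_Ω(E) = Per^s_Ω(E, Eᶜ)`. -/
noncomputable def nlPer (n : ℕ) (s : ℝ) (Ω E : Set (EuclideanSpace ℝ (Fin n))) : ℝ≥0∞ :=
  nlArea n s Ω E Eᶜ

section aux
variable {n : ℕ} {s : ℝ}

lemma Ls_kernel_meas (hns : 0 ≤ (n : ℝ) + s) :
    Measurable (Function.uncurry fun x y : EuclideanSpace ℝ (Fin n) =>
      ENNReal.ofReal (1 / ‖x - y‖ ^ ((n : ℝ) + s))) := by
  apply Measurable.ennreal_ofReal
  have h1 : Continuous fun p : EuclideanSpace ℝ (Fin n) × EuclideanSpace ℝ (Fin n) =>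
      ‖p.1 - p.2‖ ^ ((n : ℝ) + s) :=
    (continuous_fst.sub continuous_snd).norm.rpow_const fun _ => Or.inr hns
  exact measurable_const.div h1.measurable

lemma Ls_inner_meas (hns : 0 ≤ (n : ℝ) + s) (B : Set (EuclideanSpace ℝ (Fin n))) :
    Measurable fun x : EuclideanSpace ℝ (Fin n) =>
      ∫⁻ y in B, ENNReal.ofReal (1 / ‖x - y‖ ^ ((n : ℝ) + s)) :=
  Measurable.lintegral_prod_right (Ls_kernel_meas hns)

lemma Ls_congr {S S' T T' : Set (EuclideanSpace ℝ (Fin n))}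
    (hS : S =ᵐ[volume] S') (hT : T =ᵐ[volume] T') : Ls n s S T = Ls n s S' T' := by
  unfold Ls
  rw [Measure.restrict_congr_set hS]
  exact lintegral_congr fun x => by rw [Measure.restrict_congr_set hT]

lemma Ls_add_left {S T B : Set (EuclideanSpace ℝ (Fin n))}
    (hT : MeasurableSet T) (hST : Disjoint S T) :
    Ls n s (S ∪ T) B = Ls n s S B + Ls n s T B :=
  lintegral_union hT hST

lemma Ls_add_right (hns : 0 ≤ (n : ℝ) + s) {A B C : Set (EuclideanSpace ℝ (Fin n))}
    (hC : MeasurableSet C) (hBC : Disjoint B C) :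
    Ls n s A (B ∪ C) = Ls n s A B + Ls n s A C := by
  unfold Ls
  simp_rw [lintegral_union hC hBC]
  exact lintegral_add_left (Ls_inner_meas hns B) _

lemma core (hns : 0 ≤ (n : ℝ) + s) (Ω A E : Set (EuclideanSpace ℝ (Fin n)))
    (hA : MeasurableSet A) (hE : MeasurableSet E) (hΩ : MeasurableSet Ω)
    (hAΩ : A ⊆ Ω) (hEA : E ∩ A = ∅) :
    (Ls n s ((E ∪ A) ∩ Ω) ((E ∪ A)ᶜ ∩ Ω) + Ls n s ((E ∪ A) ∩ Ω) ((E ∪ A)ᶜ ∩ Ωᶜ)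
      + Ls n s ((E ∪ A) ∩ Ωᶜ) ((E ∪ A)ᶜ ∩ Ω)) + Ls n s E A
    = (Ls n s (E ∩ Ω) (Eᶜ ∩ Ω) + Ls n s (E ∩ Ω) (Eᶜ ∩ Ωᶜ) + Ls n s (E ∩ Ωᶜ) (Eᶜ ∩ Ω))
      + Ls n s A (Eᶜ ∩ Aᶜ) := by
  have hdisj : Disjoint E A := Set.disjoint_iff_inter_eq_empty.mpr hEA
  have h1 : (E ∪ A) ∩ Ω = (E ∩ Ω) ∪ A := by
    ext x
    constructor
    · rintro ⟨hx | hx, hxΩ⟩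
      · exact Or.inl ⟨hx, hxΩ⟩
      · exact Or.inr hx
    · rintro (⟨hx, hxΩ⟩ | hx)
      · exact ⟨Or.inl hx, hxΩ⟩
      · exact ⟨Or.inr hx, hAΩ hx⟩
  have h2 : (E ∪ A) ∩ Ωᶜ = E ∩ Ωᶜ := by
    ext x
    constructor
    · rintro ⟨hx | hx, hxΩ⟩
      · exact ⟨hx, hxΩ⟩
      · exact absurd (hAΩ hx) hxΩ
    · rintro ⟨hx, hxΩ⟩; exact ⟨Or.inl hx, hxΩ⟩
  have h3 : (E ∪ A)ᶜ = Eᶜ ∩ Aᶜ := Set.compl_union E A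
  have h4 : Eᶜ ∩ Aᶜ ∩ Ωᶜ = Eᶜ ∩ Ωᶜ := by
    ext x
    constructor
    · rintro ⟨⟨hx, _⟩, hxΩ⟩; exact ⟨hx, hxΩ⟩
    · rintro ⟨hx, hxΩ⟩; exact ⟨⟨hx, fun hxA => hxΩ (hAΩ hxA)⟩, hxΩ⟩
  have h5 : Eᶜ ∩ Ω = (Eᶜ ∩ Aᶜ ∩ Ω) ∪ A := by
    ext x
    constructor
    · rintro ⟨hx, hxΩ⟩
      by_cases hxA : x ∈ A
      · exact Or.inr hxA
      · exact Or.inl ⟨⟨hx, hxA⟩, hxΩ⟩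
    · rintro (⟨⟨hx, _⟩, hxΩ⟩ | hxA)
      · exact ⟨hx, hxΩ⟩
      · exact ⟨fun hxE => (Set.eq_empty_iff_forall_notMem.mp hEA x) ⟨hxE, hxA⟩, hAΩ hxA⟩
  have hEsplit : E = (E ∩ Ω) ∪ (E ∩ Ωᶜ) := by
    rw [← Set.inter_union_distrib_left, Set.union_compl_self, Set.inter_univ]
  have hCsplit : Eᶜ ∩ Aᶜ = (Eᶜ ∩ Aᶜ ∩ Ω) ∪ (Eᶜ ∩ Ωᶜ) := by
    rw [← h4, ← Set.inter_union_distrib_left, Set.union_compl_self, Set.inter_univ]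
  have hdCA : Disjoint (Eᶜ ∩ Aᶜ ∩ Ω) A :=
    disjoint_compl_left.mono_left (Set.inter_subset_left.trans Set.inter_subset_right)
  have hdΩ : Disjoint (E ∩ Ω) (E ∩ Ωᶜ) :=
    disjoint_compl_right.mono Set.inter_subset_right Set.inter_subset_right
  have hdΩ' : Disjoint (Eᶜ ∩ Aᶜ ∩ Ω) (Eᶜ ∩ Ωᶜ) :=
    disjoint_compl_right.mono Set.inter_subset_right Set.inter_subset_right
  have hdEΩA : Disjoint (E ∩ Ω) A := hdisj.mono_left Set.inter_subset_left
  rw [h1, h2, h3, h4, h5,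
    Ls_add_left hA hdEΩA, Ls_add_left hA hdEΩA,
    Ls_add_right hns hA hdCA, Ls_add_right hns hA hdCA,
    show Ls n s A (Eᶜ ∩ Aᶜ) = Ls n s A (Eᶜ ∩ Aᶜ ∩ Ω) + Ls n s A (Eᶜ ∩ Ωᶜ) by
      rw [← Ls_add_right hns (hE.compl.inter hΩ.compl) hdΩ', ← hCsplit],
    show Ls n s E A = Ls n s (E ∩ Ω) A + Ls n s (E ∩ Ωᶜ) A by
      rw [← Ls_add_left (hE.inter hΩ.compl) hdΩ, ← hEsplit]]
  ring

end aux

/-- For `A ⊆ Ω`, `E` measurable with `|E ∩ A| = 0`,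
`Per^s_Ω(E ∪ A) + L^s(E, A) = Per^s_Ω(E) + L^s(A, Eᶜ ∩ Aᶜ)`. -/
theorem nlPer_enlarge_identity
    (n : ℕ) (hn : 1 ≤ n) (s : ℝ) (hs : s ∈ Set.Ioo (0 : ℝ) 1)
    (Ω : Set (EuclideanSpace ℝ (Fin n))) (hΩo : IsOpen Ω) (hΩconn : IsConnected Ω)
    (hΩb : Bornology.IsBounded Ω)
    (A E : Set (EuclideanSpace ℝ (Fin n))) (hA : MeasurableSet A) (hE : MeasurableSet E)
    (hAΩ : A ⊆ Ω) (hEA : volume (E ∩ A) = 0) :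
    nlPer n s Ω (E ∪ A) + Ls n s E A = nlPer n s Ω E + Ls n s A (Eᶜ ∩ Aᶜ) := by
  have hns : 0 ≤ (n : ℝ) + s := add_nonneg (Nat.cast_nonneg n) hs.1.le
  set E' : Set (EuclideanSpace ℝ (Fin n)) := E \ A with hE'def
  have hE' : MeasurableSet E' := hE.diff hA
  have hΩ : MeasurableSet Ω := hΩo.measurableSet
  have hEE' : E =ᵐ[volume] E' := by
    rw [ae_eq_set]
    constructor
    · rw [Set.diff_diff_right_self]; exact hEA
    · simp [hE'def, Set.diff_subset]
  have hcEE' : Eᶜ =ᵐ[volume] E'ᶜ := ae_eq_set_compl_compl.mpr hEE'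
  have hunion : E ∪ A = E' ∪ A := (Set.diff_union_self).symm
  have hE'A : E' ∩ A = ∅ := by
    ext x; simp [hE'def]
  have hper : nlPer n s Ω E = nlPer n s Ω E' := by
    unfold nlPer nlArea
    exact congrArg₂ (· + ·) (congrArg₂ (· + ·)
      (Ls_congr (s := s) (ae_eq_set_inter hEE' (ae_eq_refl Ω)) (ae_eq_set_inter hcEE' (ae_eq_refl Ω)))
      (Ls_congr (s := s) (ae_eq_set_inter hEE' (ae_eq_refl Ω)) (ae_eq_set_inter hcEE' (ae_eq_refl Ωᶜ))))
      (Ls_congr (s := s) (ae_eq_set_inter hEE' (ae_eq_refl Ωᶜ)) (ae_eq_set_inter hcEE' (ae_eq_refl Ω)))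
  have hLsEA : Ls n s E A = Ls n s E' A := Ls_congr hEE' (ae_eq_refl A)
  have hLsA : Ls n s A (Eᶜ ∩ Aᶜ) = Ls n s A (E'ᶜ ∩ Aᶜ) :=
    Ls_congr (ae_eq_refl A) (ae_eq_set_inter hcEE' (ae_eq_refl Aᶜ))
  rw [hunion, hper, hLsEA, hLsA]
  exact core hns Ω A E' hA hE' hΩ hAΩ hE'A
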